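/- Let $G$ be any group and $V$ a finite-dimensional vector space over a field $\mathbb{K}$. Every linear cellular automaton $\tau \colon V^G \to V^G$ has closed image in $V^G$ for the prodiscrete topology. -/

import Mathlib

/-- `τ` is a cellular automaton over the group `G` and alphabet `A`:
there are a finite memory set `M ⊆ G` and a local defining map
`μ : A^M → A` with `τ(x)(g) = μ((g⁻¹ · x)|_M)`; note `(g⁻¹ · x)(m) = x (g * m)`. -/
def IsCellularAutomaton {G A : Type*} [Group G] (τ : (G → A) → (G → A)) : Prop :=
  ∃ (M : Finset G) (μ : (M → A) → A),
    ∀ (x : G → A) (g : G), τ x g = μ (fun m => x (g * m.val))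


/-- The prodiscrete topology on `G → A`: product of discrete topologies. -/
def prodiscrete (G A : Type*) : TopologicalSpace (G → A) :=
  @Pi.topologicalSpace G (fun _ => A) (fun _ => ⊥)


open Module

section Aux

variable {K : Type*} [Field K]

lemma affine_eq_of_le_of_finrank_le {E : Type*} [AddCommGroup E] [Module K E]
    [FiniteDimensional K E] {s t : AffineSubspace K E} (hne : (s : Set E).Nonempty)
    (hle : s ≤ t) (hr : finrank K t.direction ≤ finrank K s.direction) : s = t := by
  have hd : s.direction = t.direction :=
    Submodule.eq_of_le_of_finrank_le (AffineSubspace.direction_le hle) hr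
  obtain ⟨p, hp⟩ := hne
  exact AffineSubspace.ext_of_direction_eq hd ⟨p, hp, hle hp⟩

lemma affine_min {E : Type*} [AddCommGroup E] [Module K E] [FiniteDimensional K E]
    (s : ℕ → AffineSubspace K E) (hne : ∀ k, (s k : Set E).Nonempty)
    (hanti : ∀ {k l : ℕ}, k ≤ l → s l ≤ s k) :
    ∃ k0, ∀ k, k0 ≤ k → s k = s k0 := by
  obtain ⟨k0, hk0⟩ : ∃ k0, ∀ k, finrank K (s k0).direction ≤ finrank K (s k).direction := by
    set f : ℕ → ℕ := fun k => finrank K (s k).direction with hf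
    obtain ⟨k0, hk0⟩ := Nat.sInf_mem (Set.range_nonempty f)
    refine ⟨k0, fun k => ?_⟩
    show f k0 ≤ f k
    rw [hk0]
    exact Nat.sInf_le ⟨k, rfl⟩
  exact ⟨k0, fun k hk => affine_eq_of_le_of_finrank_le (hne k) (hanti hk) (hk0 k)⟩

end Aux

lemma countable_closure_finset {G : Type*} [Group G] (M : Finset G) :
    ((Subgroup.closure (M : Set G) : Subgroup G) : Set G).Countable := by
  classical
  set s : Set G := (M : Set G) ∪ ((M : Set G))⁻¹ with hs
  haveI : Countable s := (((M.finite_toSet).union (M.finite_toSet.inv)).countable).to_subtype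
  have hsub : ((Subgroup.closure (M : Set G) : Subgroup G) : Set G) ⊆
      Set.range (fun l : List s => (l.map Subtype.val).prod) := by
    intro x hx
    have hx' : x ∈ Submonoid.closure s := by
      rw [hs, ← Subgroup.closure_toSubmonoid]; exact hx
    obtain ⟨l, hl, rfl⟩ := Submonoid.exists_list_of_mem_closure hx'
    refine ⟨l.attach.map fun a => (⟨a.1, hl a.1 a.2⟩ : s), ?_⟩
    simp [List.map_map, Function.comp]
  exact Set.Countable.mono hsub (Set.countable_range _)

section PerClass

variable {G K V : Type*} [Group G] [Field K] [AddCommGroup V] [Module K V]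
  [FiniteDimensional K V]

lemma perclass (τ : (G → V) → (G → V)) (hlin : IsLinearMap K τ)
    (M : Finset G) (μ : ({ x // x ∈ M } → V) → V)
    (hμ : ∀ x g, τ x g = μ (fun m => x (g * m.val)))
    (y : G → V) (hy : ∀ Ω : Finset G, ∃ x, ∀ g ∈ Ω, τ x g = y g)
    (C : Set G) (hC : C.Countable) (hCne : C.Nonempty)
    (hCM : ∀ g ∈ C, ∀ m ∈ M, g * m ∈ C) :
    ∃ x, ∀ g ∈ C, τ x g = y g := by
  classical
  obtain ⟨c, rfl⟩ := hC.exists_eq_range hCne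
  -- indices for translated coordinates
  set J : ℕ → G → ℕ := fun i m =>
    if h : ∃ j, c j = c i * m then Nat.find h else 0 with hJdef
  have hJ : ∀ (i : ℕ), ∀ m ∈ M, c (J i m) = c i * m := by
    intro i m hm
    have h : ∃ j, c j = c i * m := hCM (c i) ⟨i, rfl⟩ m hm
    simp only [hJdef, dif_pos h]
    exact Nat.find_spec h
  -- the window function
  set ρ : ℕ → ℕ := fun n =>
    (Finset.range n).sup (fun i => (i + 1) ⊔ M.sup (fun m => J i m + 1)) with hρdef
  have hρmono : Monotone ρ := fun a b hab =>
    Finset.sup_mono (Finset.range_subset_range.2 hab)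
  have hρself : ∀ n, n ≤ ρ n := by
    intro n
    cases n with
    | zero => exact Nat.zero_le _
    | succ k =>
      have h1 : (k + 1) ⊔ M.sup (fun m => J k m + 1) ≤ ρ (k + 1) :=
        Finset.le_sup (f := fun i => (i + 1) ⊔ M.sup (fun m => J i m + 1))
          (Finset.self_mem_range_succ k)
      exact le_trans le_sup_left h1
  have hρJ : ∀ {i n : ℕ}, i < n → ∀ m ∈ M, J i m < ρ n := by
    intro i n hin m hm
    have h1 : J i m + 1 ≤ M.sup (fun m => J i m + 1) :=
      Finset.le_sup (f := fun m => J i m + 1) hm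
    have h2 : (i + 1) ⊔ M.sup (fun m => J i m + 1) ≤ ρ n :=
      Finset.le_sup (f := fun i => (i + 1) ⊔ M.sup (fun m => J i m + 1))
        (Finset.mem_range.2 hin)
    exact lt_of_lt_of_le (Nat.lt_succ_self _) (le_trans (le_trans h1 le_sup_right) h2)
  -- linear algebra setup
  set T : (G → V) →ₗ[K] (G → V) := IsLinearMap.mk' τ hlin with hT
  set pj : ∀ k : ℕ, (G → V) →ₗ[K] (Fin k → V) :=
    fun k => LinearMap.funLeft K V (fun i : Fin k => c i.1) with hpj
  set SA : ℕ → AffineSubspace K (G → V) := fun k =>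
    AffineSubspace.comap ((pj k).comp T).toAffineMap
      (AffineSubspace.mk' (fun i : Fin k => y (c i.1)) ⊥) with hSA
  have mem_SA : ∀ {k : ℕ} {x : G → V}, x ∈ SA k ↔ ∀ i : Fin k, τ x (c i.1) = y (c i.1) := by
    intro k x
    simp only [hSA, AffineSubspace.mem_comap, AffineSubspace.mem_mk',
      Submodule.mem_bot, vsub_eq_sub, sub_eq_zero, LinearMap.coe_toAffineMap,
      LinearMap.comp_apply, hpj, LinearMap.funLeft_apply, hT, IsLinearMap.mk'_apply]
    exact funext_iff
  have SAne : ∀ k, (SA k : Set (G → V)).Nonempty := by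
    intro k
    obtain ⟨x, hx⟩ := hy ((Finset.univ : Finset (Fin k)).image fun i => c i.1)
    exact ⟨x, mem_SA.2 fun i => hx _ (Finset.mem_image_of_mem _ (Finset.mem_univ i))⟩
  have SAanti : ∀ {k l : ℕ}, k ≤ l → SA l ≤ SA k := by
    intro k l hkl x hx
    exact mem_SA.2 fun i => mem_SA.1 hx ⟨i.1, lt_of_lt_of_le i.2 hkl⟩
  -- projected affine subspaces
  set Im : (n : ℕ) → ℕ → AffineSubspace K (Fin (ρ n) → V) := fun n k =>
    (SA k).map (pj (ρ n)).toAffineMap with hIm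
  have mem_Im : ∀ {n k : ℕ} {v : Fin (ρ n) → V},
      v ∈ Im n k ↔ ∃ x ∈ SA k, (fun i : Fin (ρ n) => x (c i.1)) = v := by
    intro n k v
    simp only [hIm, AffineSubspace.mem_map, LinearMap.coe_toAffineMap]
    constructor
    · rintro ⟨x, hx, he⟩
      exact ⟨x, hx, by simpa [hpj, LinearMap.funLeft, Function.comp_def] using he⟩
    · rintro ⟨x, hx, he⟩
      exact ⟨x, hx, by simpa [hpj, LinearMap.funLeft, Function.comp_def] using he⟩
  have Imne : ∀ n k, ((Im n k : AffineSubspace K (Fin (ρ n) → V)) : Set (Fin (ρ n) → V)).Nonempty := by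
    intro n k
    obtain ⟨x, hx⟩ := SAne k
    exact ⟨_, mem_Im.2 ⟨x, hx, rfl⟩⟩
  have Imanti : ∀ (n : ℕ) {k l : ℕ}, k ≤ l → Im n l ≤ Im n k := by
    intro n k l hkl v hv
    obtain ⟨x, hx, he⟩ := mem_Im.1 hv
    exact mem_Im.2 ⟨x, SAanti hkl hx, he⟩
  have hL : ∀ n, ∃ k0, ∀ k, k0 ≤ k → Im n k = Im n k0 :=
    fun n => affine_min (Im n) (Imne n) (fun {k l} h => Imanti n h)
  choose L hLs using hL
  set Yn : (n : ℕ) → AffineSubspace K (Fin (ρ n) → V) := fun n => Im n (L n) with hYn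
  -- surjectivity of the stabilized system
  have surj : ∀ n (v : Fin (ρ n) → V), v ∈ Yn n →
      ∃ w, w ∈ Yn (n + 1) ∧
        ∀ i : Fin (ρ n), w (Fin.castLE (hρmono (Nat.le_succ n)) i) = v i := by
    intro n v hv
    set k := max (L n) (L (n + 1)) with hk
    have hv' : v ∈ Im n k := by
      rw [hLs n k (le_max_left _ _)]; exact hv
    obtain ⟨x, hx, he⟩ := mem_Im.1 hv'
    refine ⟨fun i : Fin (ρ (n + 1)) => x (c i.1), ?_, ?_⟩
    · have hmem : (fun i : Fin (ρ (n + 1)) => x (c i.1)) ∈ Im (n + 1) k :=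
        mem_Im.2 ⟨x, hx, rfl⟩
      rw [hLs (n + 1) k (le_max_right _ _)] at hmem
      exact hmem
    · intro i
      rw [← he]
      rfl
  -- build a compatible thread
  have h0 := Imne 0 (L 0)
  set z : ∀ n : ℕ, {v : Fin (ρ n) → V // v ∈ Yn n} :=
    fun n => Nat.rec ⟨h0.choose, h0.choose_spec⟩
      (fun n p => ⟨(surj n p.1 p.2).choose,
        ((surj n p.1 p.2).choose_spec).1⟩) n with hz
  have zstep : ∀ n (i : Fin (ρ n)),
      (z (n + 1)).1 (Fin.castLE (hρmono (Nat.le_succ n)) i) = (z n).1 i := by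
    intro n i
    exact ((surj n (z n).1 (z n).2).choose_spec).2 i
  have compat : ∀ (n m : ℕ) (hnm : n ≤ m) (j : ℕ) (hj : j < ρ n),
      (z m).1 ⟨j, lt_of_lt_of_le hj (hρmono hnm)⟩ = (z n).1 ⟨j, hj⟩ := by
    intro n m hnm
    induction hnm with
    | refl => intro j hj; rfl
    | @step m h ih =>
      intro j hj
      have hjm : j < ρ m := lt_of_lt_of_le hj (hρmono h)
      exact (zstep m ⟨j, hjm⟩).trans (ih j hj)
  -- consistency of each layer along equal coordinates
  have zc : ∀ (n : ℕ) (i j : Fin (ρ n)), c i.1 = c j.1 → (z n).1 i = (z n).1 j := by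
    intro n i j hij
    obtain ⟨x, hx, he⟩ := mem_Im.1 (z n).2
    rw [← he]
    simp only [hij]
  -- the glued configuration
  set xC : G → V := fun g =>
    if hg : ∃ i, c i = g then
      (z (Nat.find hg + 1)).1 ⟨Nat.find hg,
        lt_of_lt_of_le (Nat.lt_succ_self _) (hρself _)⟩
    else 0 with hxCdef
  have hxC : ∀ (n : ℕ) (j : ℕ) (hj : j < ρ n), xC (c j) = (z n).1 ⟨j, hj⟩ := by
    intro n j hj
    have hg : ∃ i, c i = c j := ⟨j, rfl⟩
    rw [hxCdef]
    simp only [dif_pos hg]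
    set i := Nat.find hg with hi
    have hci : c i = c j := Nat.find_spec hg
    set m := max n (i + 1) with hm
    have hiρ : i < ρ m := lt_of_lt_of_le (lt_of_lt_of_le (Nat.lt_succ_self _) (hρself _))
      (hρmono (le_max_right _ _))
    have hjρ : j < ρ m := lt_of_lt_of_le hj (hρmono (le_max_left _ _))
    exact ((compat (i + 1) m (le_max_right _ _) i
        (lt_of_lt_of_le (Nat.lt_succ_self _) (hρself _))).symm).trans
      ((zc m ⟨i, hiρ⟩ ⟨j, hjρ⟩ hci).trans (compat n m (le_max_left _ _) j hj))
  -- conclusion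
  refine ⟨xC, ?_⟩
  rintro g ⟨i, rfl⟩
  set n := i + 1 with hn
  have hYle : Yn n ≤ Im n n := by
    have h1 : Im n (max n (L n)) = Yn n := hLs n _ (le_max_right _ _)
    have h2 : Im n (max n (L n)) ≤ Im n n := Imanti n (le_max_left _ _)
    rw [← h1]; exact h2
  obtain ⟨x', hx', he⟩ := mem_Im.1 (hYle (z n).2)
  have hagree : ∀ m' ∈ M, xC (c i * m') = x' (c i * m') := by
    intro m' hm'
    have hj : c (J i m') = c i * m' := hJ i m' hm'
    have hjρ : J i m' < ρ n := hρJ (Nat.lt_succ_self i) m' hm'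
    rw [← hj, hxC n _ hjρ, ← he]
  have : τ xC (c i) = τ x' (c i) := by
    rw [hμ xC (c i), hμ x' (c i)]
    congr 1
    funext m'
    exact hagree m'.1 m'.2
  rw [this]
  exact mem_SA.1 hx' ⟨i, Nat.lt_succ_self i⟩

end PerClass

theorem linear_ca_closed_image
    {G : Type*} [Group G] {K V : Type*} [Field K]
    [AddCommGroup V] [Module K V] [FiniteDimensional K V]
    (τ : (G → V) → (G → V)) (hlin : IsLinearMap K τ)
    (hca : IsCellularAutomaton τ) :
    @IsClosed _ (prodiscrete G V) (Set.range τ) := by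
  classical
  obtain ⟨M, μ, hμ⟩ := hca
  letI : TopologicalSpace V := ⊥
  haveI : DiscreteTopology V := ⟨rfl⟩
  show IsClosed (Set.range τ)
  apply isClosed_of_closure_subset
  intro y hy
  -- local approximability
  have happ : ∀ Ω : Finset G, ∃ x, ∀ g ∈ Ω, τ x g = y g := by
    intro Ω
    have hO : IsOpen ((↑Ω : Set G).pi fun g => ({y g} : Set V)) :=
      isOpen_set_pi Ω.finite_toSet fun _ _ => isOpen_discrete _
    have hyO : y ∈ (↑Ω : Set G).pi fun g => ({y g} : Set V) := fun g _ => rfl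
    obtain ⟨z, hz1, hz2⟩ := mem_closure_iff.1 hy _ hO hyO
    obtain ⟨x, rfl⟩ := hz2
    exact ⟨x, fun g hg => hz1 g hg⟩
  -- the memory subgroup and its cosets
  set H : Subgroup G := Subgroup.closure (M : Set G) with hH
  have hHc : ((H : Set G)).Countable := countable_closure_finset M
  set Cl : G → Set G := fun g₀ => {x | (QuotientGroup.mk x : G ⧸ H) = QuotientGroup.mk g₀}
    with hCl
  have hClc : ∀ g₀, (Cl g₀).Countable := by
    intro g₀
    have hsub : Cl g₀ ⊆ (fun h => g₀ * h) '' (H : Set G) := by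
      intro x hx
      have : g₀⁻¹ * x ∈ H := QuotientGroup.eq.1 hx.symm
      exact ⟨g₀⁻¹ * x, this, by group⟩
    exact (hHc.image _).mono hsub
  have hClM : ∀ g₀, ∀ g ∈ Cl g₀, ∀ m ∈ M, g * m ∈ Cl g₀ := by
    intro g₀ g hg m hm
    have hmH : m ∈ H := Subgroup.subset_closure hm
    have : (QuotientGroup.mk (g * m) : G ⧸ H) = QuotientGroup.mk g :=
      (QuotientGroup.eq).2 (by simpa using (H.inv_mem hmH))
    exact Set.mem_setOf.2 (this.trans hg)
  have hsol : ∀ g₀ : G, ∃ x, ∀ g ∈ Cl g₀, τ x g = y g := fun g₀ =>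
    perclass τ hlin M μ hμ y happ (Cl g₀) (hClc g₀) ⟨g₀, rfl⟩ (hClM g₀)
  choose X hX using hsol
  set rep : G → G := fun g => (QuotientGroup.mk g : G ⧸ H).out with hrep
  have hrep_eq : ∀ g, (QuotientGroup.mk (rep g) : G ⧸ H) = QuotientGroup.mk g := fun g =>
    QuotientGroup.out_eq' _
  have hrep_mul : ∀ g, ∀ m ∈ M, rep (g * m) = rep g := by
    intro g m hm
    have hq : (QuotientGroup.mk (g * m) : G ⧸ H) = QuotientGroup.mk g :=
      QuotientGroup.eq.2 (by simpa using H.inv_mem (Subgroup.subset_closure hm))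
    simp only [hrep, hq]
  refine ⟨fun g => X (rep g) g, ?_⟩
  funext g
  have e1 : τ (fun g' => X (rep g') g') g = μ (fun m => X (rep (g * m.1)) (g * m.1)) := hμ _ g
  have e2 : (fun m : {x // x ∈ M} => X (rep (g * m.1)) (g * m.1))
      = fun m : {x // x ∈ M} => X (rep g) (g * m.1) := by
    funext m; rw [hrep_mul g m.1 m.2]
  have e3 : μ (fun m : {x // x ∈ M} => X (rep g) (g * m.1)) = τ (X (rep g)) g := (hμ _ g).symm
  have e4 : τ (X (rep g)) g = y g := hX (rep g) g (Set.mem_setOf.2 (hrep_eq g).symm)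
  rw [e1, e2, e3, e4]
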